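/- Conditional expectation of a Haar function onto the σ-algebra of a faithful system: let (b_J)_{J∈𝒟_{≤n}} be a finite faithful Haar system with Haar supports 𝓑_J and signs θ_K, and let ℱ = σ({b_J : J ∈ 𝒟_{≤n}}). If K ∈ 𝓑_{J₀} for some J₀ ∈ 𝒟_{≤n}, then 𝔼^ℱ h_K = θ_K (|K|/|J₀|) b_{J₀}; and if K is a dyadic interval not belonging to any 𝓑_J, but K is in the σ-algebra generated by the same levels, then 𝔼^ℱ h_K = 0 provided ⟨χ_{Γ_I}, h_K⟩ = 0 for all atoms Γ_I of ℱ. -/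

import Mathlib

open MeasureTheory

/-- The dyadic interval `[i / 2 ^ n, (i + 1) / 2 ^ n) ⊆ [0,1)`. -/
noncomputable def dyadicI (n i : ℕ) : Set ℝ :=
  Set.Ico ((i : ℝ) / 2 ^ n) ((i + 1 : ℝ) / 2 ^ n)

/-- The Haar function `h_I = χ_{I⁺} - χ_{I⁻}` for `I = [i / 2 ^ n, (i + 1) / 2 ^ n)`. -/
noncomputable def haarF (n i : ℕ) : ℝ → ℝ := fun t =>
  (Set.Ico ((2 * i : ℝ) / 2 ^ (n + 1)) ((2 * i + 1 : ℝ) / 2 ^ (n + 1))).indicator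
      (fun _ => (1 : ℝ)) t -
    (Set.Ico ((2 * i + 1 : ℝ) / 2 ^ (n + 1)) ((2 * i + 2 : ℝ) / 2 ^ (n + 1))).indicator
      (fun _ => (1 : ℝ)) t

/-- The iterated level sets `Γ_I` of a system `(b_J)`: `Γ_{[0,1)} = [0,1)` and
`Γ_{I^±} = Γ_I ∩ [b_I = ±1]`. -/
def levelSet (b : ℕ → ℕ → ℝ → ℝ) : ℕ → ℕ → Set ℝ
  | 0, _ => Set.Ico (0 : ℝ) 1
  | j + 1, i =>
      levelSet b j (i / 2) ∩ {t | b j (i / 2) t = if i % 2 = 0 then 1 else -1}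

lemma dyadicI_two_mul (n i : ℕ) :
    dyadicI (n + 1) (2 * i) = Set.Ico ((2 * i : ℝ) / 2 ^ (n + 1)) ((2 * i + 1 : ℝ) / 2 ^ (n + 1)) := by
  unfold dyadicI; push_cast; ring_nf

lemma dyadicI_two_mul_add_one (n i : ℕ) :
    dyadicI (n + 1) (2 * i + 1) =
      Set.Ico ((2 * i + 1 : ℝ) / 2 ^ (n + 1)) ((2 * i + 2 : ℝ) / 2 ^ (n + 1)) := by
  unfold dyadicI; push_cast; ring_nf

lemma haarF_apply (n i : ℕ) (t : ℝ) : haarF n i t =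
    (dyadicI (n + 1) (2 * i)).indicator (fun _ => (1 : ℝ)) t -
      (dyadicI (n + 1) (2 * i + 1)).indicator (fun _ => (1 : ℝ)) t := by
  rw [haarF, dyadicI_two_mul, dyadicI_two_mul_add_one]

lemma dyadicI_split (n i : ℕ) :
    dyadicI (n + 1) (2 * i) ∪ dyadicI (n + 1) (2 * i + 1) = dyadicI n i := by
  rw [dyadicI_two_mul, dyadicI_two_mul_add_one]
  rw [Set.Ico_union_Ico_eq_Ico]
  · have e1 : (2 * (i:ℝ)) / 2 ^ (n+1) = (i:ℝ) / 2 ^ n := by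
      rw [div_eq_div_iff (by positivity) (by positivity)]; ring
    have e2 : (2 * (i:ℝ) + 2) / 2 ^ (n+1) = ((i:ℝ) + 1) / 2 ^ n := by
      rw [div_eq_div_iff (by positivity) (by positivity)]; ring
    rw [e1, e2]; rfl
  · apply div_le_div_of_nonneg_right (by linarith) (by positivity)
  · apply div_le_div_of_nonneg_right (by linarith) (by positivity)

lemma disjoint_halves (n i : ℕ) :
    Disjoint (dyadicI (n + 1) (2 * i)) (dyadicI (n + 1) (2 * i + 1)) := by
  rw [dyadicI_two_mul, dyadicI_two_mul_add_one]
  exact Set.Ico_disjoint_Ico_same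

lemma haarF_pos {n i : ℕ} {t : ℝ} (ht : t ∈ dyadicI (n + 1) (2 * i)) : haarF n i t = 1 := by
  rw [haarF_apply, Set.indicator_of_mem ht, Set.indicator_of_notMem, sub_zero]
  exact fun h => (disjoint_halves n i).le_bot ⟨ht, h⟩

lemma haarF_neg {n i : ℕ} {t : ℝ} (ht : t ∈ dyadicI (n + 1) (2 * i + 1)) : haarF n i t = -1 := by
  rw [haarF_apply, Set.indicator_of_mem ht, Set.indicator_of_notMem, zero_sub]
  exact fun h => (disjoint_halves n i).le_bot ⟨h, ht⟩

lemma haarF_zero {n i : ℕ} {t : ℝ} (ht : t ∉ dyadicI n i) : haarF n i t = 0 := by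
  rw [haarF_apply, Set.indicator_of_notMem, Set.indicator_of_notMem, sub_zero]
  · exact fun h => ht (dyadicI_split n i ▸ Set.mem_union_right _ h)
  · exact fun h => ht (dyadicI_split n i ▸ Set.mem_union_left _ h)

lemma measurableSet_dyadicI (n i : ℕ) : MeasurableSet (dyadicI n i) :=
  measurableSet_Ico

lemma measurable_haarF (n i : ℕ) : Measurable (haarF n i) := by
  have : haarF n i = fun t => (dyadicI (n + 1) (2 * i)).indicator (fun _ => (1 : ℝ)) t -
      (dyadicI (n + 1) (2 * i + 1)).indicator (fun _ => (1 : ℝ)) t := funext (haarF_apply n i)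
  rw [this]
  exact ((measurable_const.indicator (measurableSet_dyadicI _ _)).sub
    (measurable_const.indicator (measurableSet_dyadicI _ _)))

lemma vol_dyadicI (n i : ℕ) : volume (dyadicI n i) = 2⁻¹ ^ n := by
  unfold dyadicI
  rw [Real.volume_Ico]
  have : (i + 1 : ℝ) / 2 ^ n - (i : ℝ) / 2 ^ n = (2⁻¹ : ℝ) ^ n := by
    field_simp
    rw [← mul_pow]; norm_num
  rw [this, ENNReal.ofReal_pow (by norm_num)]
  congr 1
  rw [ENNReal.ofReal_inv_of_pos (by norm_num)]
  norm_num

lemma dyadicI_subset {a b c d : ℕ} (h : a ≤ c) (hd : d / 2 ^ (c - a) = b) :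
    dyadicI c d ⊆ dyadicI a b := by
  set q : ℕ := 2 ^ (c - a) with hq
  have hq0 : 0 < q := Nat.pow_pos (by norm_num)
  have h1 : b * q ≤ d := by rw [← hd]; exact Nat.div_mul_le_self d q
  have h2 : d + 1 ≤ (b + 1) * q := (Nat.div_lt_iff_lt_mul hq0).mp (by omega)
  have h2c : (2:ℝ) ^ c = 2 ^ a * (q : ℝ) := by
    rw [hq]; push_cast; rw [← pow_add]; congr 1; omega
  apply Set.Ico_subset_Ico
  · rw [div_le_div_iff₀ (by positivity) (by positivity), h2c]
    have : ((b * q : ℕ) : ℝ) ≤ (d : ℝ) := by exact_mod_cast h1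
    push_cast at this ⊢
    nlinarith [pow_pos (show (0:ℝ) < 2 by norm_num) a]
  · rw [div_le_div_iff₀ (by positivity) (by positivity), h2c]
    have : ((d + 1 : ℕ) : ℝ) ≤ ((b + 1) * q : ℕ) := by exact_mod_cast h2
    push_cast at this ⊢
    nlinarith [pow_pos (show (0:ℝ) < 2 by norm_num) a]

lemma dyadicI_disjoint {a b c d : ℕ} (h : a ≤ c) (hd : d / 2 ^ (c - a) ≠ b) :
    Disjoint (dyadicI a b) (dyadicI c d) := by
  set q : ℕ := 2 ^ (c - a) with hq
  have hq0 : 0 < q := Nat.pow_pos (by norm_num)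
  have h2c : (2:ℝ) ^ c = 2 ^ a * (q : ℝ) := by
    rw [hq]; push_cast; rw [← pow_add]; congr 1; omega
  rw [Set.disjoint_left]
  rintro t ⟨hb1, hb2⟩ ⟨hd1, hd2⟩
  rcases Nat.lt_or_ge (d / q) b with hlt | hge
  · -- d + 1 ≤ b * q
    have : d + 1 ≤ b * q := by
      have := (Nat.div_lt_iff_lt_mul hq0).mp hlt
      omega
    have hr : ((d:ℝ) + 1) / 2 ^ c ≤ (b:ℝ) / 2 ^ a := by
      rw [div_le_div_iff₀ (by positivity) (by positivity), h2c]
      have : ((d + 1 : ℕ) : ℝ) ≤ ((b * q : ℕ) : ℝ) := by exact_mod_cast this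
      push_cast at this ⊢
      nlinarith [pow_pos (show (0:ℝ) < 2 by norm_num) a]
    unfold dyadicI at *
    linarith
  · have hgt : b + 1 ≤ d / q := by omega
    have : (b + 1) * q ≤ d := (Nat.le_div_iff_mul_le hq0).mp hgt
    have hr : ((b:ℝ) + 1) / 2 ^ a ≤ (d:ℝ) / 2 ^ c := by
      rw [div_le_div_iff₀ (by positivity) (by positivity), h2c]
      have : (((b + 1) * q : ℕ) : ℝ) ≤ ((d : ℕ) : ℝ) := by exact_mod_cast this
      push_cast at this ⊢
      nlinarith [pow_pos (show (0:ℝ) < 2 by norm_num) a]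
    linarith

lemma dyadicI_trichotomy {a b c d : ℕ} (h : ¬ Disjoint (dyadicI a b) (dyadicI c d)) :
    dyadicI a b ⊆ dyadicI c d ∨ dyadicI c d ⊆ dyadicI a b := by
  rcases le_total a c with hac | hca
  · right
    by_cases hd : d / 2 ^ (c - a) = b
    · exact dyadicI_subset hac hd
    · exact absurd (dyadicI_disjoint hac hd) h
  · left
    by_cases hd : b / 2 ^ (a - c) = d
    · exact dyadicI_subset hca hd
    · exact absurd (dyadicI_disjoint hca hd).symm h

/-- The half of a dyadic interval on which `haarF` takes the value `s`. -/
noncomputable def halfI (p : ℕ × ℕ) (s : ℝ) : Set ℝ :=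
  if s = 1 then dyadicI (p.1 + 1) (2 * p.2) else dyadicI (p.1 + 1) (2 * p.2 + 1)

lemma halfI_subset (p : ℕ × ℕ) (s : ℝ) : halfI p s ⊆ dyadicI p.1 p.2 := by
  unfold halfI
  split
  · exact (dyadicI_split p.1 p.2) ▸ Set.subset_union_left
  · exact (dyadicI_split p.1 p.2) ▸ Set.subset_union_right

lemma vol_halfI (p : ℕ × ℕ) (s : ℝ) : volume (halfI p s) = 2⁻¹ ^ (p.1 + 1) := by
  unfold halfI; split <;> exact vol_dyadicI _ _

lemma measurableSet_halfI (p : ℕ × ℕ) (s : ℝ) : MeasurableSet (halfI p s) := by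
  unfold halfI; split <;> exact measurableSet_dyadicI _ _

lemma haarF_on_halfI {p : ℕ × ℕ} {s : ℝ} (hs : s = 1 ∨ s = -1) {t : ℝ}
    (ht : t ∈ halfI p s) : haarF p.1 p.2 t = s := by
  rcases hs with rfl | rfl
  · rw [halfI, if_pos rfl] at ht; exact haarF_pos ht
  · rw [halfI, if_neg (by norm_num)] at ht; exact haarF_neg ht

lemma mem_halfI_haar {p : ℕ × ℕ} {t : ℝ} (ht : t ∈ dyadicI p.1 p.2) :
    t ∈ halfI p (haarF p.1 p.2 t) := by
  rw [← dyadicI_split p.1 p.2] at ht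
  rcases ht with h | h
  · rw [halfI, haarF_pos h, if_pos rfl]; exact h
  · rw [halfI, haarF_neg h, if_neg (by norm_num)]; exact h

/-- Bundle of the hypotheses of a finite faithful Haar system. -/
structure FHS (n : ℕ) (𝓑 : ℕ → ℕ → Finset (ℕ × ℕ)) (θ : ℕ × ℕ → ℝ)
    (b : ℕ → ℕ → ℝ → ℝ) : Prop where
  hθ : ∀ p, θ p = 1 ∨ θ p = -1
  hwithin : ∀ j ≤ n, ∀ i < 2 ^ j, ∀ p ∈ 𝓑 j i, ∀ q ∈ 𝓑 j i, p ≠ q →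
      Disjoint (dyadicI p.1 p.2) (dyadicI q.1 q.2)
  hdef : ∀ j ≤ n, ∀ i < 2 ^ j,
      b j i = fun t => ∑ p ∈ 𝓑 j i, θ p * haarF p.1 p.2 t
  hroot : (⋃ p ∈ 𝓑 0 0, dyadicI p.1 p.2) = Set.Ico (0 : ℝ) 1
  hfaithful : ∀ j < n, ∀ i < 2 ^ j,
      ((⋃ p ∈ 𝓑 (j + 1) (2 * i), dyadicI p.1 p.2) = {t | b j i t = 1}) ∧
      ((⋃ p ∈ 𝓑 (j + 1) (2 * i + 1), dyadicI p.1 p.2) = {t | b j i t = -1})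

namespace FHS

variable {n : ℕ} {𝓑 : ℕ → ℕ → Finset (ℕ × ℕ)} {θ : ℕ × ℕ → ℝ} {b : ℕ → ℕ → ℝ → ℝ}

/-- The union of the Haar support of `b j i`. -/
def Esup (𝓑 : ℕ → ℕ → Finset (ℕ × ℕ)) (j i : ℕ) : Set ℝ :=
  ⋃ p ∈ 𝓑 j i, dyadicI p.1 p.2

lemma b_eq_zero_outside (H : FHS n 𝓑 θ b) {j i : ℕ} (hj : j ≤ n) (hi : i < 2 ^ j) {t : ℝ}
    (ht : t ∉ Esup 𝓑 j i) : b j i t = 0 := by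
  rw [H.hdef j hj i hi]
  refine Finset.sum_eq_zero fun p hp => ?_
  have : t ∉ dyadicI p.1 p.2 := fun h => ht (Set.mem_biUnion hp h)
  rw [haarF_zero this, mul_zero]

lemma b_eq_on_piece (H : FHS n 𝓑 θ b) {j i : ℕ} (hj : j ≤ n) (hi : i < 2 ^ j) {p : ℕ × ℕ}
    (hp : p ∈ 𝓑 j i) {t : ℝ} (ht : t ∈ dyadicI p.1 p.2) :
    b j i t = θ p * haarF p.1 p.2 t := by
  rw [H.hdef j hj i hi]
  refine Finset.sum_eq_single_of_mem p hp fun q hq hne => ?_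
  have : t ∉ dyadicI q.1 q.2 := fun h =>
    (H.hwithin j hj i hi p hp q hq (Ne.symm hne)).le_bot ⟨ht, h⟩
  rw [haarF_zero this, mul_zero]

lemma setOf_b_eq (H : FHS n 𝓑 θ b) {j i : ℕ} (hj : j ≤ n) (hi : i < 2 ^ j) {ε : ℝ} (hε : ε = 1 ∨ ε = -1) :
    {t | b j i t = ε} = ⋃ p ∈ 𝓑 j i, halfI p (θ p * ε) := by
  ext t
  simp only [Set.mem_setOf_eq, Set.mem_iUnion, exists_prop]
  constructor
  · intro hb
    have hε0 : ε ≠ 0 := by rcases hε with rfl | rfl <;> norm_num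
    have htE : t ∈ Esup 𝓑 j i := by
      by_contra h
      exact hε0 (hb ▸ (H.b_eq_zero_outside hj hi h).symm ▸ rfl)
    obtain ⟨p, hp, htp⟩ := by
      simpa only [Esup, Set.mem_iUnion, exists_prop] using htE
    refine ⟨p, hp, ?_⟩
    have hb' := H.b_eq_on_piece hj hi hp htp
    have hhaar : haarF p.1 p.2 t = θ p * ε := by
      rcases H.hθ p with h1 | h1 <;> rw [h1] at hb' ⊢ <;> rw [hb, hb'] at * <;> nlinarith [hb', hb]
    exact hhaar ▸ mem_halfI_haar htp
  · rintro ⟨p, hp, ht⟩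
    have hθε : θ p * ε = 1 ∨ θ p * ε = -1 := by
      rcases H.hθ p with h1 | h1 <;> rcases hε with rfl | rfl <;> rw [h1] <;> norm_num
    have hhv := haarF_on_halfI hθε ht
    have htp : t ∈ dyadicI p.1 p.2 := halfI_subset p _ ht
    have hb2 := H.b_eq_on_piece hj hi hp htp
    rw [hb2, hhv]
    rcases H.hθ p with h1 | h1 <;> rw [h1] <;> ring

end FHS


lemma levelSet_zero (b : ℕ → ℕ → ℝ → ℝ) (i : ℕ) : levelSet b 0 i = Set.Ico (0 : ℝ) 1 := rfl

lemma levelSet_succ (b : ℕ → ℕ → ℝ → ℝ) (j i : ℕ) :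
    levelSet b (j + 1) i =
      levelSet b j (i / 2) ∩ {t | b j (i / 2) t = if i % 2 = 0 then 1 else -1} := rfl

lemma levelSet_subset_anc (b : ℕ → ℕ → ℝ → ℝ) (j : ℕ) :
    ∀ k c, levelSet b (j + k) c ⊆ levelSet b j (c / 2 ^ k) := by
  intro k
  induction k with
  | zero => intro c; simp [levelSet]
  | succ k ih =>
      intro c
      have h1 : levelSet b (j + (k + 1)) c ⊆ levelSet b (j + k) (c / 2 ^ 1) := by
        rw [show j + (k + 1) = (j + k) + 1 by omega, levelSet_succ]
        simpa using Set.inter_subset_left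
      refine h1.trans ((ih (c / 2 ^ 1)).trans ?_)
      rw [Nat.div_div_eq_div_mul, ← pow_add, show 1 + k = k + 1 by omega]

lemma levelSet_subset_Ico (b : ℕ → ℕ → ℝ → ℝ) (j c : ℕ) :
    levelSet b j c ⊆ Set.Ico (0 : ℝ) 1 := by
  have := levelSet_subset_anc b 0 j c
  simpa [levelSet_zero] using this

lemma levelSet_disjoint (b : ℕ → ℕ → ℝ → ℝ) :
    ∀ j, ∀ c < 2 ^ j, ∀ c' < 2 ^ j, c ≠ c' →
      Disjoint (levelSet b j c) (levelSet b j c') := by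
  intro j
  induction j with
  | zero => intro c hc c' hc' hne; omega
  | succ j ih =>
      intro c hc c' hc' hne
      by_cases hq : c / 2 = c' / 2
      · have hr : c % 2 ≠ c' % 2 := by omega
        rw [levelSet_succ, levelSet_succ, hq]
        rw [Set.disjoint_left]
        rintro t ⟨-, ht⟩ ⟨-, ht'⟩
        simp only [Set.mem_setOf_eq] at ht ht'
        rcases Nat.mod_two_eq_zero_or_one c with h | h <;>
          rcases Nat.mod_two_eq_zero_or_one c' with h' | h' <;>
            simp [h, h'] at ht ht' hr <;> linarith [ht, ht']
      · have := ih (c / 2) (by omega) (c' / 2) (by omega) hq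
        exact this.mono (levelSet_succ b j c ▸ Set.inter_subset_left)
          (levelSet_succ b j c' ▸ Set.inter_subset_left)

namespace FHS

variable {n : ℕ} {𝓑 : ℕ → ℕ → Finset (ℕ × ℕ)} {θ : ℕ × ℕ → ℝ} {b : ℕ → ℕ → ℝ → ℝ}

lemma b_measurable (H : FHS n 𝓑 θ b) {j i : ℕ} (hj : j ≤ n) (hi : i < 2 ^ j) :
    Measurable (b j i) := by
  rw [H.hdef j hj i hi]
  exact Finset.measurable_sum _ fun p _ => (measurable_haarF p.1 p.2).const_mul _

lemma b_pm (H : FHS n 𝓑 θ b) {j i : ℕ} (hj : j ≤ n) (hi : i < 2 ^ j) {t : ℝ}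
    (ht : t ∈ Esup 𝓑 j i) : b j i t = 1 ∨ b j i t = -1 := by
  obtain ⟨p, hp, htp⟩ : ∃ p ∈ 𝓑 j i, t ∈ dyadicI p.1 p.2 := by
    simpa only [Esup, Set.mem_iUnion, exists_prop] using ht
  rw [H.b_eq_on_piece hj hi hp htp]
  have : haarF p.1 p.2 t = 1 ∨ haarF p.1 p.2 t = -1 := by
    rw [← dyadicI_split p.1 p.2] at htp
    rcases htp with h | h
    · exact Or.inl (haarF_pos h)
    · exact Or.inr (haarF_neg h)
  rcases H.hθ p with h1 | h1 <;> rcases this with h2 | h2 <;> rw [h1, h2] <;> norm_num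

lemma levelSet_eq_Esup (H : FHS n 𝓑 θ b) :
    ∀ j ≤ n, ∀ i < 2 ^ j, levelSet b j i = Esup 𝓑 j i := by
  intro j
  induction j with
  | zero =>
      intro _ i hi
      interval_cases i
      rw [levelSet_zero, Esup, H.hroot]
  | succ j ih =>
      intro hj i hi
      have hjn : j < n := hj
      have hi2 : i / 2 < 2 ^ j := by omega
      have hEsub : {t | b j (i / 2) t = (if i % 2 = 0 then (1:ℝ) else -1)} ⊆
          levelSet b j (i / 2) := by
        rw [ih (by omega) _ hi2]
        intro t ht
        simp only [Set.mem_setOf_eq] at ht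
        by_contra hnot
        have := H.b_eq_zero_outside (by omega) hi2 hnot
        rw [this] at ht
        split at ht <;> norm_num at ht
      have hint : levelSet b (j + 1) i =
          {t | b j (i / 2) t = (if i % 2 = 0 then (1:ℝ) else -1)} := by
        rw [levelSet_succ]
        exact Set.inter_eq_right.mpr hEsub
      rw [hint]
      rcases Nat.mod_two_eq_zero_or_one i with h | h
      · have : 2 * (i / 2) = i := by omega
        rw [if_pos h, Esup, ← (H.hfaithful j hjn (i / 2) hi2).1, this]
      · have : 2 * (i / 2) + 1 = i := by omega
        rw [if_neg (by omega), Esup, ← (H.hfaithful j hjn (i / 2) hi2).2, this]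

lemma levelSet_succ_eq (H : FHS n 𝓑 θ b) {j c : ℕ} (hj : j ≤ n) (hc : c < 2 ^ (j + 1)) :
    levelSet b (j + 1) c = {t | b j (c / 2) t = (if c % 2 = 0 then (1:ℝ) else -1)} := by
  have hc2 : c / 2 < 2 ^ j := by omega
  rw [levelSet_succ]
  apply Set.inter_eq_right.mpr
  rw [H.levelSet_eq_Esup j hj _ hc2]
  intro t ht
  simp only [Set.mem_setOf_eq] at ht
  by_contra hnot
  have := H.b_eq_zero_outside hj hc2 hnot
  rw [this] at ht
  split at ht <;> norm_num at ht

lemma levelSet_measurable (H : FHS n 𝓑 θ b) :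
    ∀ j ≤ n + 1, ∀ c < 2 ^ j, MeasurableSet (levelSet b j c) := by
  intro j
  induction j with
  | zero => intro _ c _; rw [levelSet_zero]; exact measurableSet_Ico
  | succ j ih =>
      intro hj c hc
      rw [levelSet_succ]
      refine (ih (by omega) _ (by omega)).inter ?_
      have : {t | b j (c / 2) t = (if c % 2 = 0 then (1:ℝ) else -1)} =
          b j (c / 2) ⁻¹' {(if c % 2 = 0 then (1:ℝ) else -1)} := rfl
      rw [this]
      exact H.b_measurable (by omega) (by omega) (measurableSet_singleton _)

lemma exists_levelSet (H : FHS n 𝓑 θ b) :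
    ∀ j ≤ n + 1, ∀ t ∈ Set.Ico (0 : ℝ) 1, ∃ c < 2 ^ j, t ∈ levelSet b j c := by
  intro j
  induction j with
  | zero => intro _ t ht; exact ⟨0, by norm_num, ht⟩
  | succ j ih =>
      intro hj t ht
      obtain ⟨c, hc, htc⟩ := ih (by omega) t ht
      have hjn : j ≤ n := by omega
      have htE : t ∈ Esup 𝓑 j c := by rw [← H.levelSet_eq_Esup j hjn c hc]; exact htc
      rcases H.b_pm hjn hc htE with hb | hb
      · refine ⟨2 * c, by omega, ?_⟩
        rw [levelSet_succ]
        constructor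
        · rw [show 2 * c / 2 = c by omega]; exact htc
        · simp only [Set.mem_setOf_eq, show 2 * c / 2 = c by omega,
            show 2 * c % 2 = 0 by omega]
          simpa using hb
      · refine ⟨2 * c + 1, by omega, ?_⟩
        rw [levelSet_succ]
        constructor
        · rw [show (2 * c + 1) / 2 = c by omega]; exact htc
        · simp only [Set.mem_setOf_eq, show (2 * c + 1) / 2 = c by omega,
            show (2 * c + 1) % 2 = 1 by omega]
          simpa using hb

end FHS

lemma half_pow_inj {a c : ℕ} (h : (2⁻¹ : ENNReal) ^ a = 2⁻¹ ^ c) : a = c := by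
  have h' := congrArg ENNReal.toReal h
  rw [ENNReal.toReal_pow, ENNReal.toReal_pow, ENNReal.toReal_inv] at h'
  norm_num at h'
  exact h'

namespace FHS

variable {n : ℕ} {𝓑 : ℕ → ℕ → Finset (ℕ × ℕ)} {θ : ℕ × ℕ → ℝ} {b : ℕ → ℕ → ℝ → ℝ}

lemma pairwiseDisjoint_pieces (H : FHS n 𝓑 θ b) {j i : ℕ} (hj : j ≤ n) (hi : i < 2 ^ j)
    {f : ℕ × ℕ → Set ℝ} (hf : ∀ p, f p ⊆ dyadicI p.1 p.2) :
    Set.PairwiseDisjoint ↑(𝓑 j i) f := fun p hp q hq hne =>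
  (H.hwithin j hj i hi p hp q hq hne).mono (hf p) (hf q)

lemma vol_Esup (H : FHS n 𝓑 θ b) {j i : ℕ} (hj : j ≤ n) (hi : i < 2 ^ j) :
    volume (Esup 𝓑 j i) = ∑ p ∈ 𝓑 j i, volume (dyadicI p.1 p.2) := by
  exact measure_biUnion_finset (H.pairwiseDisjoint_pieces hj hi fun p => subset_rfl)
    fun p _ => measurableSet_dyadicI _ _

lemma vol_setOf_b_eq (H : FHS n 𝓑 θ b) {j i : ℕ} (hj : j ≤ n) (hi : i < 2 ^ j)
    {ε : ℝ} (hε : ε = 1 ∨ ε = -1) :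
    volume {t | b j i t = ε} = 2⁻¹ * volume (Esup 𝓑 j i) := by
  rw [H.setOf_b_eq hj hi hε]
  rw [measure_biUnion_finset (H.pairwiseDisjoint_pieces hj hi fun p => halfI_subset p _)
    fun p _ => measurableSet_halfI _ _]
  rw [H.vol_Esup hj hi, Finset.mul_sum]
  refine Finset.sum_congr rfl fun p _ => ?_
  rw [vol_halfI, vol_dyadicI, pow_succ']

lemma vol_levelSet (H : FHS n 𝓑 θ b) :
    ∀ j ≤ n + 1, ∀ c < 2 ^ j, volume (levelSet b j c) = 2⁻¹ ^ j := by
  intro j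
  induction j with
  | zero =>
      intro _ c _
      rw [levelSet_zero, Real.volume_Ico]
      norm_num
  | succ j ih =>
      intro hj c hc
      have hjn : j ≤ n := by omega
      have hc2 : c / 2 < 2 ^ j := by omega
      rw [H.levelSet_succ_eq hjn hc]
      have hε : (if c % 2 = 0 then (1:ℝ) else -1) = 1 ∨
          (if c % 2 = 0 then (1:ℝ) else -1) = -1 := by split <;> simp
      rw [H.vol_setOf_b_eq hjn hc2 hε, ← H.levelSet_eq_Esup j hjn _ hc2,
        ih (by omega) _ hc2, pow_succ']

set_option maxHeartbeats 1000000 in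
lemma vol_levelSet_inter (H : FHS n 𝓑 θ b) {j₀ i₀ km m : ℕ} (hj₀ : j₀ ≤ n)
    (hi₀ : i₀ < 2 ^ j₀) (hK : (km, m) ∈ 𝓑 j₀ i₀) :
    ∀ k, j₀ + k ≤ n + 1 → ∀ c < 2 ^ (j₀ + k), c / 2 ^ k = i₀ →
      volume (levelSet b (j₀ + k) c ∩ dyadicI km m) = 2⁻¹ ^ (km + k) := by
  intro k
  induction k with
  | zero =>
      intro _ c hc hci
      rw [Nat.pow_zero, Nat.div_one] at hci
      subst hci
      have hsub : dyadicI km m ⊆ levelSet b (j₀ + 0) c := by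
        rw [Nat.add_zero, H.levelSet_eq_Esup j₀ hj₀ c hc]
        exact Set.subset_biUnion_of_mem (u := fun p => dyadicI p.1 p.2) hK
      rw [Set.inter_eq_right.mpr hsub, vol_dyadicI, Nat.add_zero]
  | succ k ih =>
      intro hjk c hc hci
      set j := j₀ + k with hjdef
      have hjn : j ≤ n := by omega
      have ha : c / 2 < 2 ^ j := by
        have : (2:ℕ) ^ (j₀ + (k+1)) = 2 ^ (j + 1) := by rw [hjdef]; ring_nf
        omega
      have hai : (c / 2) / 2 ^ k = i₀ := by
        rw [Nat.div_div_eq_div_mul, show 2 * 2 ^ k = 2 ^ (k + 1) by rw [pow_succ]; ring]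
        exact hci
      have hIH : volume (levelSet b j (c / 2) ∩ dyadicI km m) = 2⁻¹ ^ (km + k) :=
        ih (by omega) (c / 2) ha hai
      -- the dichotomy for each piece
      have hdich : ∀ p ∈ 𝓑 j (c / 2), Disjoint (dyadicI p.1 p.2) (dyadicI km m) ∨
          dyadicI p.1 p.2 ⊆ dyadicI km m := by
        intro p hp
        by_cases hd : Disjoint (dyadicI p.1 p.2) (dyadicI km m)
        · exact Or.inl hd
        right
        rcases dyadicI_trichotomy hd with hsub | hsub
        · exact hsub
        -- dyadicI km m ⊆ dyadicI p.1 p.2 : derive k = 0 and p = (km, m)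
        have hKlev : dyadicI km m ⊆ levelSet b j (c / 2) := by
          rw [H.levelSet_eq_Esup j hjn _ ha]
          exact hsub.trans (Set.subset_biUnion_of_mem (u := fun p => dyadicI p.1 p.2) hp)
        have : volume (levelSet b j (c / 2) ∩ dyadicI km m) = 2⁻¹ ^ km := by
          rw [Set.inter_eq_right.mpr hKlev, vol_dyadicI]
        have hk0 : km + k = km := half_pow_inj (hIH.symm.trans this)
        have hk0' : k = 0 := by omega
        subst hk0'
        rw [Nat.pow_zero, Nat.div_one] at hai
        rw [hai] at hp
        have hjj : j = j₀ := by omega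
        rw [hjj] at hp
        by_cases hpe : p = (km, m)
        · rw [hpe]
        · exact absurd (H.hwithin j₀ hj₀ i₀ hi₀ p hp (km, m) hK hpe) hd
      -- rewrite the level set
      have hcc : c < 2 ^ (j + 1) := by
        have : (2:ℕ) ^ (j₀ + (k+1)) = 2 ^ (j + 1) := by rw [hjdef]; ring_nf
        omega
      have hstep : levelSet b (j₀ + (k + 1)) c =
          {t | b j (c / 2) t = (if c % 2 = 0 then (1:ℝ) else -1)} := by
        rw [show j₀ + (k + 1) = j + 1 by omega]
        exact H.levelSet_succ_eq hjn hcc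
      have hε : (if c % 2 = 0 then (1:ℝ) else -1) = 1 ∨
          (if c % 2 = 0 then (1:ℝ) else -1) = -1 := by split <;> simp
      rw [hstep, H.setOf_b_eq hjn ha hε, Set.iUnion₂_inter]
      rw [measure_biUnion_finset
        (H.pairwiseDisjoint_pieces hjn ha fun p =>
          (Set.inter_subset_left).trans (halfI_subset p _))
        (fun p _ => (measurableSet_halfI _ _).inter (measurableSet_dyadicI _ _))]
      have hsum : ∑ p ∈ 𝓑 j (c / 2),
          volume (halfI p (θ p * (if c % 2 = 0 then (1:ℝ) else -1)) ∩ dyadicI km m) =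
          2⁻¹ * ∑ p ∈ 𝓑 j (c / 2), volume (dyadicI p.1 p.2 ∩ dyadicI km m) := by
        rw [Finset.mul_sum]
        refine Finset.sum_congr rfl fun p hp => ?_
        rcases hdich p hp with hd | hsub
        · have h1 : halfI p (θ p * (if c % 2 = 0 then (1:ℝ) else -1)) ∩ dyadicI km m = ∅ :=
            Set.eq_empty_of_subset_empty ((hd.mono_left (halfI_subset p _)).inter_eq.le)
          have h2 : dyadicI p.1 p.2 ∩ dyadicI km m = ∅ :=
            Set.eq_empty_of_subset_empty hd.inter_eq.le
          rw [h1, h2]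
          simp
        · have h1 : halfI p (θ p * (if c % 2 = 0 then (1:ℝ) else -1)) ∩ dyadicI km m =
              halfI p (θ p * (if c % 2 = 0 then (1:ℝ) else -1)) :=
            Set.inter_eq_left.mpr ((halfI_subset p _).trans hsub)
          have h2 : dyadicI p.1 p.2 ∩ dyadicI km m = dyadicI p.1 p.2 :=
            Set.inter_eq_left.mpr hsub
          rw [h1, h2, vol_halfI, vol_dyadicI, pow_succ']
      rw [hsum]
      have hEK : ∑ p ∈ 𝓑 j (c / 2), volume (dyadicI p.1 p.2 ∩ dyadicI km m) =
          volume (levelSet b j (c / 2) ∩ dyadicI km m) := by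
        rw [H.levelSet_eq_Esup j hjn _ ha, Esup, Set.iUnion₂_inter]
        rw [measure_biUnion_finset
          (H.pairwiseDisjoint_pieces hjn ha fun p => Set.inter_subset_left)
          (fun p _ => (measurableSet_dyadicI _ _).inter (measurableSet_dyadicI _ _))]
      rw [hEK, hIH, show km + (k + 1) = (km + k) + 1 by omega, pow_succ']

end FHS

namespace FHS

variable {n : ℕ} {𝓑 : ℕ → ℕ → Finset (ℕ × ℕ)} {θ : ℕ × ℕ → ℝ} {b : ℕ → ℕ → ℝ → ℝ}

lemma atom_subset_level (b : ℕ → ℕ → ℝ → ℝ) {n j : ℕ} (hj : j ≤ n + 1) (c : ℕ) :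
    levelSet b (n + 1) c ⊆ levelSet b j (c / 2 ^ (n + 1 - j)) := by
  have := levelSet_subset_anc b j (n + 1 - j) c
  rwa [show j + (n + 1 - j) = n + 1 by omega] at this

lemma anc_lt {j N c : ℕ} (hj : j ≤ N) (hc : c < 2 ^ N) : c / 2 ^ (N - j) < 2 ^ j := by
  have h2 : (2:ℕ) ^ N = 2 ^ (N - j) * 2 ^ j := by rw [← pow_add]; congr 1; omega
  exact Nat.div_lt_of_lt_mul (h2 ▸ hc)

lemma atom_subset_setOf (H : FHS n 𝓑 θ b) {j c : ℕ} (hj : j ≤ n) (hc : c < 2 ^ (n + 1)) :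
    levelSet b (n + 1) c ⊆
      {t | b j (c / 2 ^ (n + 1 - j)) t =
        (if (c / 2 ^ (n - j)) % 2 = 0 then (1:ℝ) else -1)} := by
  have h1 := atom_subset_level b (show j + 1 ≤ n + 1 by omega) c
  refine h1.trans ?_
  rw [levelSet_succ]
  refine Set.inter_subset_right.trans ?_
  have he : c / 2 ^ (n + 1 - (j + 1)) = c / 2 ^ (n - j) := by
    congr 2
    omega
  have he2 : (c / 2 ^ (n - j)) / 2 = c / 2 ^ (n + 1 - j) := by
    rw [Nat.div_div_eq_div_mul, ← pow_succ]
    congr 2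
    omega
  rw [he, he2]

lemma b_const_on_atom (H : FHS n 𝓑 θ b) {j i c : ℕ} (hj : j ≤ n) (hi : i < 2 ^ j)
    (hc : c < 2 ^ (n + 1)) :
    ∃ v : ℝ, ∀ t ∈ levelSet b (n + 1) c, b j i t = v := by
  set a := c / 2 ^ (n + 1 - j) with hadef
  have ha : a < 2 ^ j := anc_lt (by omega) hc
  by_cases hai : a = i
  · refine ⟨if (c / 2 ^ (n - j)) % 2 = 0 then (1:ℝ) else -1, fun t ht => ?_⟩
    have := H.atom_subset_setOf hj hc ht
    rw [← hadef, hai] at this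
    exact this
  · refine ⟨0, fun t ht => ?_⟩
    have h1 : t ∈ levelSet b j a := atom_subset_level b (by omega) c ht
    have hdisj := levelSet_disjoint b j a ha i hi hai
    have h2 : t ∉ levelSet b j i := fun h => hdisj.le_bot ⟨h1, h⟩
    rw [H.levelSet_eq_Esup j hj i hi] at h2
    exact H.b_eq_zero_outside hj hi h2

/-- The σ-algebra whose measurable sets are those that do not split any atom. -/
def atomAlgebra (b : ℕ → ℕ → ℝ → ℝ) (n : ℕ) : MeasurableSpace ℝ where
  MeasurableSet' s := ∀ c < 2 ^ (n + 1),
    levelSet b (n + 1) c ⊆ s ∨ levelSet b (n + 1) c ∩ s = ∅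
  measurableSet_empty := fun c _ => Or.inr (Set.inter_empty _)
  measurableSet_compl := by
    intro s hs c hc
    rcases hs c hc with h | h
    · refine Or.inr (Set.eq_empty_of_forall_notMem fun t ⟨ht1, ht2⟩ => ht2 (h ht1))
    · refine Or.inl fun t ht hts => ?_
      have : t ∈ levelSet b (n + 1) c ∩ s := ⟨ht, hts⟩
      rw [h] at this
      exact this
  measurableSet_iUnion := by
    intro f hf c hc
    by_cases hex : ∃ k, levelSet b (n + 1) c ⊆ f k
    · obtain ⟨k, hk⟩ := hex
      exact Or.inl (hk.trans (Set.subset_iUnion f k))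
    · push_neg at hex
      refine Or.inr (Set.eq_empty_of_forall_notMem fun t ⟨ht1, ht2⟩ => ?_)
      obtain ⟨k, htk⟩ := Set.mem_iUnion.mp ht2
      rcases hf k c hc with h | h
      · exact hex k h
      · have : t ∈ levelSet b (n + 1) c ∩ f k := ⟨ht1, htk⟩
        rw [h] at this
        exact this

lemma comap_le_atomAlgebra (H : FHS n 𝓑 θ b) {j i : ℕ} (hj : j ≤ n) (hi : i < 2 ^ j) :
    MeasurableSpace.comap (b j i) Real.measurableSpace ≤ atomAlgebra b n := by
  rintro s ⟨A, _, rfl⟩ c hc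
  obtain ⟨v, hv⟩ := H.b_const_on_atom hj hi hc
  by_cases hvA : v ∈ A
  · exact Or.inl fun t ht => by simpa [hv t ht] using hvA
  · refine Or.inr (Set.eq_empty_of_forall_notMem fun t ⟨ht1, ht2⟩ => ?_)
    rw [Set.mem_preimage, hv t ht1] at ht2
    exact hvA ht2

end FHS

lemma integrable_haarF_vol (n i : ℕ) : Integrable (haarF n i) volume := by
  have h : haarF n i = fun t =>
      (dyadicI (n + 1) (2 * i)).indicator (fun _ => (1 : ℝ)) t -
        (dyadicI (n + 1) (2 * i + 1)).indicator (fun _ => (1 : ℝ)) t :=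
    funext (haarF_apply n i)
  rw [h]
  refine Integrable.sub ?_ ?_ <;>
    · rw [integrable_indicator_iff (measurableSet_dyadicI _ _)]
      refine integrableOn_const (ne_of_lt ?_)
      rw [vol_dyadicI]
      exact ENNReal.pow_lt_top (by norm_num)

namespace FHS

variable {n : ℕ} {𝓑 : ℕ → ℕ → Finset (ℕ × ℕ)} {θ : ℕ × ℕ → ℝ} {b : ℕ → ℕ → ℝ → ℝ}

lemma b_integrable (H : FHS n 𝓑 θ b) {j i : ℕ} (hj : j ≤ n) (hi : i < 2 ^ j) :
    Integrable (b j i) volume := by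
  rw [H.hdef j hj i hi]
  exact integrable_finset_sum _ fun p _ => (integrable_haarF_vol p.1 p.2).const_mul _

lemma setIntegral_decomp (H : FHS n 𝓑 θ b) {s : Set ℝ} (hs : MeasurableSet s)
    {f : ℝ → ℝ} (hf : IntegrableOn f (Set.Ico (0:ℝ) 1) volume) :
    ∫ t in s, f t ∂(volume.restrict (Set.Ico (0:ℝ) 1)) =
      ∑ c ∈ Finset.range (2 ^ (n + 1)),
        ∫ t in levelSet b (n + 1) c ∩ s, f t ∂volume := by
  rw [Measure.restrict_restrict hs]
  have hcover : s ∩ Set.Ico (0:ℝ) 1 =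
      ⋃ c ∈ Finset.range (2 ^ (n + 1)), (levelSet b (n + 1) c ∩ s) := by
    ext t
    simp only [Set.mem_iUnion, Finset.mem_range, Set.mem_inter_iff, exists_prop]
    constructor
    · rintro ⟨hts, htI⟩
      obtain ⟨c, hc, htc⟩ := H.exists_levelSet (n + 1) le_rfl t htI
      exact ⟨c, hc, htc, hts⟩
    · rintro ⟨c, hc, htc, hts⟩
      exact ⟨hts, levelSet_subset_Ico b (n + 1) c htc⟩
  rw [hcover]
  exact integral_biUnion_finset _
    (fun c hc => (H.levelSet_measurable (n + 1) le_rfl c (Finset.mem_range.mp hc)).inter hs)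
    (fun c hc c' hc' hne =>
      (levelSet_disjoint b (n + 1) _ (Finset.mem_range.mp hc) _
        (Finset.mem_range.mp hc') hne).mono Set.inter_subset_left Set.inter_subset_left)
    (fun c hc => hf.mono_set (Set.inter_subset_left.trans (levelSet_subset_Ico b (n + 1) c)))

set_option maxHeartbeats 1000000 in
lemma atom_integral_case1 (H : FHS n 𝓑 θ b) {j₀ i₀ km m : ℕ} (hj₀ : j₀ ≤ n)
    (hi₀ : i₀ < 2 ^ j₀) (hK : (km, m) ∈ 𝓑 j₀ i₀) {c : ℕ} (hc : c < 2 ^ (n + 1)) :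
    ∫ t in levelSet b (n + 1) c, haarF km m t ∂volume =
      ∫ t in levelSet b (n + 1) c, θ (km, m) * ((2:ℝ) ^ j₀ / 2 ^ km) * b j₀ i₀ t ∂volume := by
  have hAmeas : MeasurableSet (levelSet b (n + 1) c) :=
    H.levelSet_measurable (n + 1) le_rfl c hc
  set a := c / 2 ^ (n + 1 - j₀) with hadef
  have ha : a < 2 ^ j₀ := anc_lt (by omega) hc
  by_cases hai : a = i₀
  · -- the atom lies in the support of b j₀ i₀
    set εv : ℝ := if (c / 2 ^ (n - j₀)) % 2 = 0 then (1:ℝ) else -1 with hεdef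
    have hεv : εv = 1 ∨ εv = -1 := by rw [hεdef]; split <;> simp
    have hbA : ∀ t ∈ levelSet b (n + 1) c, b j₀ i₀ t = εv := by
      intro t ht
      have := H.atom_subset_setOf hj₀ hc ht
      rw [← hadef, hai] at this
      exact this
    have hθK := H.hθ (km, m)
    -- right-hand side
    have hRHS : ∫ t in levelSet b (n + 1) c, θ (km, m) * ((2:ℝ) ^ j₀ / 2 ^ km) * b j₀ i₀ t ∂volume
        = (volume (levelSet b (n + 1) c)).toReal * (θ (km, m) * ((2:ℝ) ^ j₀ / 2 ^ km) * εv) := by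
      rw [setIntegral_congr_fun hAmeas
        (g := fun _ => θ (km, m) * ((2:ℝ) ^ j₀ / 2 ^ km) * εv)
        (fun t ht => by rw [hbA t ht])]
      rw [setIntegral_const, smul_eq_mul, measureReal_def]
    -- split off the part outside K
    have hintOn : IntegrableOn (haarF km m) (levelSet b (n + 1) c) volume :=
      (integrable_haarF_vol km m).integrableOn
    have hsplit := integral_inter_add_diff (μ := volume) (s := levelSet b (n + 1) c)
      (t := dyadicI km m) (f := haarF km m) (measurableSet_dyadicI km m) hintOn
    have hdiff : ∫ t in levelSet b (n + 1) c \ dyadicI km m, haarF km m t ∂volume = 0 := by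
      rw [setIntegral_congr_fun (hAmeas.diff (measurableSet_dyadicI km m))
        (g := fun _ => (0:ℝ)) (fun t ht => haarF_zero ht.2)]
      simp
    have hinter : ∫ t in levelSet b (n + 1) c ∩ dyadicI km m, haarF km m t ∂volume =
        (volume (levelSet b (n + 1) c ∩ dyadicI km m)).toReal * (θ (km, m) * εv) := by
      rw [setIntegral_congr_fun (hAmeas.inter (measurableSet_dyadicI km m))
        (g := fun _ => θ (km, m) * εv) ?_]
      · rw [setIntegral_const, smul_eq_mul, measureReal_def]
      · intro t ht
        have hb1 := H.b_eq_on_piece hj₀ hi₀ hK ht.2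
        have hb2 := hbA t ht.1
        rw [hb1] at hb2
        have hb2' : θ (km, m) * haarF km m t = εv := hb2
        show haarF km m t = θ (km, m) * εv
        rcases hθK with h1 | h1 <;> rw [h1] at hb2' ⊢ <;> linarith
    have hvol1 : volume (levelSet b (n + 1) c ∩ dyadicI km m) =
        2⁻¹ ^ (km + (n + 1 - j₀)) := by
      have := H.vol_levelSet_inter hj₀ hi₀ hK (n + 1 - j₀) (by omega) c
        (by rw [show j₀ + (n + 1 - j₀) = n + 1 by omega]; exact hc)
        (by rw [← hadef]; exact hai)
      rwa [show j₀ + (n + 1 - j₀) = n + 1 by omega] at this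
    have hvol2 : volume (levelSet b (n + 1) c) = 2⁻¹ ^ (n + 1) :=
      H.vol_levelSet (n + 1) le_rfl c hc
    rw [← hsplit, hdiff, hinter, hRHS, hvol1, hvol2, add_zero]
    have htr : ∀ e : ℕ, ((2⁻¹ : ENNReal) ^ e).toReal = (2⁻¹ : ℝ) ^ e := by
      intro e
      rw [ENNReal.toReal_pow, ENNReal.toReal_inv]
      norm_num
    rw [htr, htr]
    have hpow : (2:ℝ) ^ (km + (n + 1 - j₀)) * 2 ^ j₀ = 2 ^ km * 2 ^ (n + 1) := by
      rw [← pow_add, ← pow_add]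
      congr 1
      omega
    have h2km : (2:ℝ) ^ km ≠ 0 := by positivity
    have h2j : (2:ℝ) ^ j₀ ≠ 0 := by positivity
    rw [inv_pow, inv_pow]
    field_simp
    linear_combination (-(θ (km, m) * εv)) * hpow
  · -- the atom is disjoint from the support of b j₀ i₀
    have hlev : levelSet b (n + 1) c ⊆ levelSet b j₀ a := atom_subset_level b (by omega) c
    have hdisj := levelSet_disjoint b j₀ a ha i₀ hi₀ hai
    have hnot : ∀ t ∈ levelSet b (n + 1) c, t ∉ Esup 𝓑 j₀ i₀ := by
      intro t ht hmem
      rw [← H.levelSet_eq_Esup j₀ hj₀ i₀ hi₀] at hmem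
      exact hdisj.le_bot ⟨hlev ht, hmem⟩
    have hKsub : dyadicI km m ⊆ Esup 𝓑 j₀ i₀ :=
      Set.subset_biUnion_of_mem (u := fun p => dyadicI p.1 p.2) hK
    have hL : ∫ t in levelSet b (n + 1) c, haarF km m t ∂volume = 0 := by
      rw [setIntegral_congr_fun hAmeas (f := haarF km m) (g := fun _ => (0:ℝ))
        (fun t ht => haarF_zero fun hk => hnot t ht (hKsub hk))]
      simp
    have hR : ∫ t in levelSet b (n + 1) c,
        θ (km, m) * ((2:ℝ) ^ j₀ / 2 ^ km) * b j₀ i₀ t ∂volume = 0 := by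
      rw [setIntegral_congr_fun hAmeas
        (f := fun t => θ (km, m) * ((2:ℝ) ^ j₀ / 2 ^ km) * b j₀ i₀ t) (g := fun _ => (0:ℝ))
        (fun t ht => by simp [H.b_eq_zero_outside hj₀ hi₀ (hnot t ht)])]
      simp
    rw [hL, hR]

end FHS


set_option maxHeartbeats 1000000 in
/-- Conditional expectation of a Haar function `h_K` onto `ℱ = σ({b_J : J ∈ 𝒟_{≤ n}})`
for a finite faithful Haar system `(b_J)`: if `K ∈ 𝓑_{J₀}`, then
`𝔼^ℱ h_K = θ_K (|K|/|J₀|) b_{J₀}` a.e.; and if `K` belongs to no `𝓑_J` and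
`⟨χ_{Γ_I}, h_K⟩ = 0` for all atoms `Γ_I` of `ℱ`, then `𝔼^ℱ h_K = 0` a.e. -/
theorem condexp_haar_onto_faithful_system
    (n : ℕ) (𝓑 : ℕ → ℕ → Finset (ℕ × ℕ)) (θ : ℕ × ℕ → ℝ)
    (b : ℕ → ℕ → ℝ → ℝ)
    (hθ : ∀ p, θ p = 1 ∨ θ p = -1)
    (hvalid : ∀ j ≤ n, ∀ i < 2 ^ j, ∀ p ∈ 𝓑 j i, p.2 < 2 ^ p.1)
    (hdisjoint_within : ∀ j ≤ n, ∀ i < 2 ^ j, ∀ p ∈ 𝓑 j i, ∀ q ∈ 𝓑 j i, p ≠ q →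
      Disjoint (dyadicI p.1 p.2) (dyadicI q.1 q.2))
    (hdisjoint_between : ∀ j ≤ n, ∀ i < 2 ^ j, ∀ j' ≤ n, ∀ i' < 2 ^ j',
      (j, i) ≠ (j', i') → 𝓑 j i ∩ 𝓑 j' i' = ∅)
    (hdef : ∀ j ≤ n, ∀ i < 2 ^ j,
      b j i = fun t => ∑ p ∈ 𝓑 j i, θ p * haarF p.1 p.2 t)
    (hroot : (⋃ p ∈ 𝓑 0 0, dyadicI p.1 p.2) = Set.Ico (0 : ℝ) 1)
    (hfaithful : ∀ j < n, ∀ i < 2 ^ j,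
      ((⋃ p ∈ 𝓑 (j + 1) (2 * i), dyadicI p.1 p.2) = {t | b j i t = 1}) ∧
      ((⋃ p ∈ 𝓑 (j + 1) (2 * i + 1), dyadicI p.1 p.2) = {t | b j i t = -1}))
    (μ : Measure ℝ) (hμ : μ = volume.restrict (Set.Ico (0 : ℝ) 1))
    (ℱ : MeasurableSpace ℝ)
    (hℱ : ℱ = ⨆ j ∈ Finset.range (n + 1), ⨆ i ∈ Finset.range (2 ^ j),
      MeasurableSpace.comap (b j i) Real.measurableSpace)
    (km m : ℕ) (hm : m < 2 ^ km) :
    (∀ j₀ ≤ n, ∀ i₀ < 2 ^ j₀, (km, m) ∈ 𝓑 j₀ i₀ →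
      μ[haarF km m | ℱ] =ᵐ[μ]
        fun t => θ (km, m) * ((2 : ℝ) ^ j₀ / 2 ^ km) * b j₀ i₀ t) ∧
    ((∀ j ≤ n, ∀ i < 2 ^ j, (km, m) ∉ 𝓑 j i) →
      (∀ i < 2 ^ (n + 1), ∫ t in levelSet b (n + 1) i, haarF km m t = 0) →
      μ[haarF km m | ℱ] =ᵐ[μ] 0) := by
  have H : FHS n 𝓑 θ b := ⟨hθ, hdisjoint_within, hdef, hroot, hfaithful⟩
  subst hμ
  set μ := volume.restrict (Set.Ico (0 : ℝ) 1) with hμdef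
  have hle : ℱ ≤ Real.measurableSpace := by
    rw [hℱ]
    refine iSup_le fun j => iSup_le fun hj => iSup_le fun i => iSup_le fun hi => ?_
    exact measurable_iff_comap_le.mp
      (H.b_measurable (Nat.lt_succ_iff.mp (Finset.mem_range.mp hj)) (Finset.mem_range.mp hi))
  have hatom : ℱ ≤ FHS.atomAlgebra b n := by
    rw [hℱ]
    refine iSup_le fun j => iSup_le fun hj => iSup_le fun i => iSup_le fun hi => ?_
    exact H.comap_le_atomAlgebra (Nat.lt_succ_iff.mp (Finset.mem_range.mp hj))
      (Finset.mem_range.mp hi)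
  haveI : IsFiniteMeasure μ := by
    constructor
    rw [hμdef, Measure.restrict_apply_univ, Real.volume_Ico]
    norm_num
  have hfInt : Integrable (haarF km m) μ := (integrable_haarF_vol km m).restrict
  letI : MeasurableSpace ℝ := Real.measurableSpace
  constructor
  · intro j₀ hj₀ i₀ hi₀ hK
    set g : ℝ → ℝ := fun t => θ (km, m) * ((2 : ℝ) ^ j₀ / 2 ^ km) * b j₀ i₀ t with hg
    have hgInt : Integrable g μ := ((H.b_integrable hj₀ hi₀).const_mul _).restrict
    have hcomap : MeasurableSpace.comap (b j₀ i₀) Real.measurableSpace ≤ ℱ := by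
      rw [hℱ]
      calc MeasurableSpace.comap (b j₀ i₀) Real.measurableSpace
          ≤ ⨆ i ∈ Finset.range (2 ^ j₀),
              MeasurableSpace.comap (b j₀ i) Real.measurableSpace :=
            le_iSup₂ (f := fun i (_ : i ∈ Finset.range (2 ^ j₀)) =>
              MeasurableSpace.comap (b j₀ i) Real.measurableSpace) i₀
              (Finset.mem_range.mpr hi₀)
        _ ≤ ⨆ j ∈ Finset.range (n + 1), ⨆ i ∈ Finset.range (2 ^ j),
              MeasurableSpace.comap (b j i) Real.measurableSpace :=
            le_iSup₂ (f := fun j (_ : j ∈ Finset.range (n + 1)) =>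
              ⨆ i ∈ Finset.range (2 ^ j),
                MeasurableSpace.comap (b j i) Real.measurableSpace) j₀
              (Finset.mem_range.mpr (by omega))
    have hgm : AEStronglyMeasurable[ℱ] g μ :=
      StronglyMeasurable.aestronglyMeasurable
        (Measurable.stronglyMeasurable ((measurable_iff_comap_le.mpr hcomap).const_mul _))
    refine (ae_eq_condExp_of_forall_setIntegral_eq hle hfInt
      (fun s _ _ => hgInt.integrableOn) (fun s hs _ => ?_) hgm).symm
    have hsb : MeasurableSet[Real.measurableSpace] s := hle s hs
    have hsA : ∀ c < 2 ^ (n + 1),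
        levelSet b (n + 1) c ⊆ s ∨ levelSet b (n + 1) c ∩ s = ∅ := hatom s hs
    rw [hμdef]
    rw [H.setIntegral_decomp hsb ((H.b_integrable hj₀ hi₀).const_mul _).integrableOn,
      H.setIntegral_decomp hsb (integrable_haarF_vol km m).integrableOn]
    refine Finset.sum_congr rfl fun c hc => ?_
    have hc' := Finset.mem_range.mp hc
    rcases hsA c hc' with hsub | hempty
    · rw [Set.inter_eq_left.mpr hsub]
      exact (H.atom_integral_case1 hj₀ hi₀ hK hc').symm
    · rw [hempty]
      simp
  · intro hnK hint
    have hgm : AEStronglyMeasurable[ℱ] (0 : ℝ → ℝ) μ :=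
      StronglyMeasurable.aestronglyMeasurable stronglyMeasurable_zero
    refine (ae_eq_condExp_of_forall_setIntegral_eq hle hfInt
      (fun s _ _ => (integrable_zero _ _ _).integrableOn) (fun s hs _ => ?_) hgm).symm
    have hsb : MeasurableSet[Real.measurableSpace] s := hle s hs
    have hsA : ∀ c < 2 ^ (n + 1),
        levelSet b (n + 1) c ⊆ s ∨ levelSet b (n + 1) c ∩ s = ∅ := hatom s hs
    simp only [Pi.zero_apply]
    rw [integral_zero, hμdef,
      H.setIntegral_decomp hsb (integrable_haarF_vol km m).integrableOn]
    symm
    refine Finset.sum_eq_zero fun c hc => ?_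
    have hc' := Finset.mem_range.mp hc
    rcases hsA c hc' with hsub | hempty
    · rw [Set.inter_eq_left.mpr hsub]
      exact hint c hc'
    · rw [hempty]
      simp
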